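/- Let S ⊆ 𝔽₂^n be a self-orthogonal subspace (S ⊆ S^⊥) with basis b^(1),…,b^(dim S), and let ℓ^(1),…,ℓ^(k) ∈ S^⊥ be given. Suppose t ∈ {+1,−1}^n satisfies ∑_i v_i t_i ≡ 0 (mod 4) for every basis vector v of S and ∑_i ℓ^(a)_i t_i ≡ 0 (mod 4) for all a. Then ∑_i v_i t_i ≡ 0 (mod 4) for every v ∈ S, and for any ℓ ∈ S^⊥ and any s ∈ S, ∑_i ((ℓ+s) mod 2)_i t_i ≡ ∑_i ℓ_i t_i (mod 4). -/

import Mathlib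

private lemma val_add_eq (a b : ZMod 2) :
    ((a + b).val : ℤ) = (a.val : ℤ) + (b.val : ℤ) - 2 * ((a * b).val : ℤ) := by
  fin_cases a <;> fin_cases b <;> rfl

private lemma key_lemma (n : ℕ) (t : Fin n → ℤ) (ht : ∀ i, t i = 1 ∨ t i = -1)
    (x y : Fin n → ZMod 2) (hxy : ∑ i, x i * y i = (0 : ZMod 2)) :
    (∑ i, (((x + y) i).val : ℤ) * t i) ≡
      (∑ i, ((x i).val : ℤ) * t i) + (∑ i, ((y i).val : ℤ) * t i) [ZMOD 4] := by
  have hsum : (∑ i, (((x + y) i).val : ℤ) * t i)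
      = (∑ i, ((x i).val : ℤ) * t i) + (∑ i, ((y i).val : ℤ) * t i)
        - 2 * ∑ i, ((x i * y i).val : ℤ) * t i := by
    rw [Finset.mul_sum, ← Finset.sum_add_distrib, ← Finset.sum_sub_distrib]
    refine Finset.sum_congr rfl fun i _ => ?_
    have h := val_add_eq (x i) (y i)
    simp only [Pi.add_apply]
    linear_combination (t i) * h
  have hkey : ∀ i : Fin n, ((((x i * y i).val : ℤ) * t i : ℤ) : ZMod 2) = x i * y i := by
    intro i
    rcases ht i with h | h <;>
      push_cast [h, ZMod.natCast_val, ZMod.cast_id] <;>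
      simp [CharTwo.neg_eq]
  have hc : ((∑ i, ((x i * y i).val : ℤ) * t i : ℤ) : ZMod 2) = 0 := by
    rw [Int.cast_sum]
    simp only [hkey]
    exact hxy
  have heven : (2 : ℤ) ∣ ∑ i, ((x i * y i).val : ℤ) * t i := by
    have := (ZMod.intCast_zmod_eq_zero_iff_dvd _ 2).mp hc
    exact_mod_cast this
  simp only [Int.ModEq] at *
  omega

/-- Given a self-orthogonal subspace `S ⊆ 𝔽₂^n` with spanning set `B`, vectors
`ℓ^(a) ∈ S^⊥`, and signs `t_i = ±1` with `∑ v_i t_i ≡ 0 (mod 4)` for every `v ∈ B` and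
every `ℓ^(a)`, we have `∑ v_i t_i ≡ 0 (mod 4)` for all `v ∈ S`, and for any `ℓ ∈ S^⊥`
and `s ∈ S`, `∑ ((ℓ+s) mod 2)_i t_i ≡ ∑ ℓ_i t_i (mod 4)`. -/
theorem sign_assignment_mod_four (n k : ℕ)
    (S : Submodule (ZMod 2) (Fin n → ZMod 2))
    (hself : ∀ u ∈ S, ∀ v ∈ S, ∑ i, u i * v i = (0 : ZMod 2))
    (B : Set (Fin n → ZMod 2)) (hB : Submodule.span (ZMod 2) B = S)
    (ℓ : Fin k → Fin n → ZMod 2)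
    (hℓperp : ∀ a, ∀ s ∈ S, ∑ i, ℓ a i * s i = (0 : ZMod 2))
    (t : Fin n → ℤ) (ht : ∀ i, t i = 1 ∨ t i = -1)
    (hBt : ∀ v ∈ B, (∑ i, ((v i).val : ℤ) * t i) ≡ 0 [ZMOD 4])
    (hℓt : ∀ a, (∑ i, ((ℓ a i).val : ℤ) * t i) ≡ 0 [ZMOD 4]) :
    (∀ v ∈ S, (∑ i, ((v i).val : ℤ) * t i) ≡ 0 [ZMOD 4]) ∧
    (∀ l : Fin n → ZMod 2, (∀ s ∈ S, ∑ i, l i * s i = (0 : ZMod 2)) →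
      ∀ s ∈ S,
        (∑ i, (((l + s) i).val : ℤ) * t i) ≡ (∑ i, ((l i).val : ℤ) * t i) [ZMOD 4]) := by
  have hSpart : ∀ v ∈ S, (∑ i, ((v i).val : ℤ) * t i) ≡ 0 [ZMOD 4] := by
    intro v hv
    rw [← hB] at hv
    induction hv using Submodule.span_induction with
    | mem x hx => exact hBt x hx
    | zero => simp
    | add x y hx hy ihx ihy =>
        have hxS : x ∈ S := hB ▸ hx
        have hyS : y ∈ S := hB ▸ hy
        have := key_lemma n t ht x y (hself x hxS y hyS)
        calc (∑ i, (((x + y) i).val : ℤ) * t i)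
            ≡ (∑ i, ((x i).val : ℤ) * t i) + (∑ i, ((y i).val : ℤ) * t i) [ZMOD 4] := this
          _ ≡ 0 + 0 [ZMOD 4] := Int.ModEq.add ihx ihy
          _ = 0 := by ring
    | smul c x hx ihx =>
        fin_cases c
        · show ∑ i, ((((0 : ZMod 2) • x) i).val : ℤ) * t i ≡ 0 [ZMOD 4]
          simp
        · show ∑ i, ((((1 : ZMod 2) • x) i).val : ℤ) * t i ≡ 0 [ZMOD 4]
          simpa using ihx
  refine ⟨hSpart, fun l hl s hs => ?_⟩
  have h1 := key_lemma n t ht l s (hl s hs)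
  have h2 := hSpart s hs
  calc (∑ i, (((l + s) i).val : ℤ) * t i)
      ≡ (∑ i, ((l i).val : ℤ) * t i) + (∑ i, ((s i).val : ℤ) * t i) [ZMOD 4] := h1
    _ ≡ (∑ i, ((l i).val : ℤ) * t i) + 0 [ZMOD 4] := Int.ModEq.add_left _ h2
    _ = ∑ i, ((l i).val : ℤ) * t i := by ring
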